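/- Let n ≥ 0 and let A = ℤ/nℤ (so A = ℤ when n = 0). Let (V_I, D) be a hypercube complex over 𝔽₂ on {0,1}^N in which every V_I is finite-dimensional and carries an A-grading V_I = ⊕_{j∈A} V_I^j such that each diagonal component raises degree by 1 (d_I(V_I^j) ⊆ V_I^{j+1}), and suppose there is a function s : {0,1}^N → A such that every component satisfies D_{J,I}(V_I^j) ⊆ V_J^{j+1+s(I)−s(J)}. Grade V by total degree, V^i = ⊕_I V_I^{i−s(I)}, so that D raises total degree by 1. Then for every i ∈ A, dim_{𝔽₂} H^i(V, D) ≤ Σ_{I ∈ {0,1}^N} dim_{𝔽₂} H^{i−s(I)}(V_I, d_I). (This is Corollary 1.2 in abstract form, with s(I) playing the role of the grading shift σ(I) − n₋.) -/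
import Mathlib

/-- The `(J,I)` component of an endomorphism `D` of the product `∀ I, V I`. -/
noncomputable def hcComp {ι : Type*} [DecidableEq ι] (V : ι → Type*)
    [∀ i, AddCommGroup (V i)] [∀ i, Module (ZMod 2) (V i)]
    (D : (∀ i, V i) →ₗ[ZMod 2] (∀ i, V i)) (J I : ι) : V I →ₗ[ZMod 2] V J :=
  (LinearMap.proj J).comp (D.comp (LinearMap.single (ZMod 2) V I))

/-- The weight `w(I) = Σ_i I_i` of a vertex of the hypercube `{0,1}^N`. -/
def wt {N : ℕ} (I : Fin N → Bool) : ℕ :=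
  (Finset.univ.filter fun i => I i = true).card

/-- Degree-`i` homology of a differential `d` on a space graded by `G : ZMod n → Submodule`:
(kernel of `d` in degree `i`) modulo (the image under `d` of degree `i - 1`). -/
abbrev GrHmlg {W : Type*} [AddCommGroup W] [Module (ZMod 2) W] {n : ℕ}
    (d : W →ₗ[ZMod 2] W) (G : ZMod n → Submodule (ZMod 2) W) (i : ZMod n) :=
  ↥(LinearMap.ker d ⊓ G i) ⧸
    (Submodule.map d (G (i - 1))).comap (LinearMap.ker d ⊓ G i).subtype

/-- Binary value of a hypercube vertex. -/
def vlv {N : ℕ} (I : Fin N → Bool) : ℕ :=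
  ((finFunctionFinEquiv (fun i => if I i then (1 : Fin 2) else 0) : Fin (2 ^ N)) : ℕ)

lemma vlv_lt {N : ℕ} (I : Fin N → Bool) : vlv I < 2 ^ N :=
  (finFunctionFinEquiv (fun i => if I i then (1 : Fin 2) else 0)).isLt

lemma vlv_inj {N : ℕ} {I J : Fin N → Bool} (h : vlv I = vlv J) : I = J := by
  have h2 := Fin.val_injective h
  have h3 := finFunctionFinEquiv.injective h2
  funext i
  have := congrFun h3 i
  by_cases hI : I i <;> by_cases hJ : J i <;> simp_all

lemma vlv_mono {N : ℕ} {I J : Fin N → Bool} (h : I ≤ J) : vlv I ≤ vlv J := by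
  unfold vlv
  rw [finFunctionFinEquiv_apply, finFunctionFinEquiv_apply]
  apply Finset.sum_le_sum
  intro i _
  by_cases hI : I i
  · have : J i = true := by have := h i; rw [hI] at this; exact Bool.eq_true_of_true_le this
    simp [hI, this]
  · simp [hI]

section hc
variable {N : ℕ} (V : (Fin N → Bool) → Type*)
  [∀ I, AddCommGroup (V I)] [∀ I, Module (ZMod 2) (V I)]
  (D : (∀ I, V I) →ₗ[ZMod 2] (∀ I, V I))

lemma hcComp_apply' (J I : Fin N → Bool) (y : V I) :
    hcComp V D J I y = D (Pi.single I y) J := rfl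

lemma apply_eq_sum_comp (x : ∀ I, V I) (I : Fin N → Bool) :
    D x I = ∑ J, hcComp V D I J (x J) := by
  conv_lhs => rw [← Finset.univ_sum_single x]
  rw [map_sum]
  rw [Finset.sum_apply]
  rfl

/-- The filtration submodule: vectors vanishing on vertices of value `< m`. -/
def Fsub (m : ℕ) : Submodule (ZMod 2) (∀ I, V I) where
  carrier := {x | ∀ I, vlv I < m → x I = 0}
  add_mem' := fun {a b} ha hb I h => by simp [ha I h, hb I h]
  zero_mem' := fun I _ => rfl
  smul_mem' := fun c x hx I h => by simp [hx I h]

lemma mem_Fsub {m : ℕ} {x : ∀ I, V I} : x ∈ Fsub V m ↔ ∀ I, vlv I < m → x I = 0 :=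
  Iff.rfl

lemma Fsub_zero : Fsub V 0 = ⊤ := by
  ext x; simp [mem_Fsub]

lemma Fsub_top : Fsub V (2 ^ N) = ⊥ := by
  ext x
  simp only [mem_Fsub, Submodule.mem_bot]
  constructor
  · intro h; funext I; exact h I (vlv_lt I)
  · intro h I _; simp [h]

lemma Fsub_antitone {m m' : ℕ} (h : m ≤ m') : Fsub V m' ≤ Fsub V m :=
  fun _ hx I hI => hx I (lt_of_lt_of_le hI h)

end hc

section rk
variable {K W W' : Type*} [Field K] [AddCommGroup W] [Module K W]
  [AddCommGroup W'] [Module K W'] [FiniteDimensional K W]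

/-- Rank-nullity for a submodule under a linear map. -/
lemma rank_split (f : W →ₗ[K] W') (p : Submodule K W) :
    Module.finrank K p =
      Module.finrank K (p.map f) + Module.finrank K ↥(p ⊓ LinearMap.ker f) := by
  have h := LinearMap.finrank_range_add_finrank_ker (f.domRestrict p)
  have hr : LinearMap.range (f.domRestrict p) = p.map f := by
    ext y
    simp only [LinearMap.mem_range, Submodule.mem_map, LinearMap.domRestrict_apply,
      Subtype.exists]
    constructor
    · rintro ⟨x, hx, rfl⟩; exact ⟨x, hx, rfl⟩
    · rintro ⟨x, hx, rfl⟩; exact ⟨x, hx, rfl⟩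
  have hmap : Submodule.map p.subtype (LinearMap.ker (f.domRestrict p)) =
      p ⊓ LinearMap.ker f := by
    ext x
    simp only [Submodule.mem_map, LinearMap.mem_ker, LinearMap.domRestrict_apply,
      Submodule.mem_inf, Submodule.coe_subtype, Subtype.exists]
    constructor
    · rintro ⟨y, hy, h0, rfl⟩; exact ⟨hy, h0⟩
    · rintro ⟨hx, h0⟩; exact ⟨x, hx, h0, rfl⟩
  have hk : Module.finrank K (LinearMap.ker (f.domRestrict p)) =
      Module.finrank K ↥(p ⊓ LinearMap.ker f) := by
    rw [← Submodule.finrank_map_subtype_eq p (LinearMap.ker (f.domRestrict p)), hmap]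
  rw [hr, hk] at h
  omega

/-- Dimension of the `GrHmlg`-style quotient. -/
lemma finrank_quot (p B : Submodule K W) (h : B ≤ p) :
    Module.finrank K (↥p ⧸ B.comap p.subtype) + Module.finrank K B =
      Module.finrank K p := by
  have h1 := Submodule.finrank_quotient_add_finrank (B.comap p.subtype)
  have h2 : Module.finrank K (B.comap p.subtype) = Module.finrank K B := by
    rw [← Submodule.finrank_map_subtype_eq p (B.comap p.subtype),
      Submodule.map_comap_subtype, inf_of_le_right h]
  omega

end rk
/-- Graded rank inequality (Corollary 1.2 in abstract form): if a hypercube complex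
carries `ZMod n`-gradings on the vertex spaces, with the diagonal differentials of
degree 1 and the component `D_{J,I}` of degree `1 + s(I) - s(J)`, then in each total
degree `i` the dimension of the homology of the total complex is bounded by
`Σ_I dim H^{i-s(I)}(V_I, d_I)`. The total grading on `V = ⊕_I V_I` is
`V^i = ⊕_I V_I^{i-s(I)}`. -/
theorem hypercube_graded_rank_inequality
    (n N : ℕ) (hN : 1 ≤ N) (V : (Fin N → Bool) → Type*)
    [∀ I, AddCommGroup (V I)] [∀ I, Module (ZMod 2) (V I)]
    [∀ I, Module.Finite (ZMod 2) (V I)]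
    (D : (∀ I, V I) →ₗ[ZMod 2] (∀ I, V I))
    (hD2 : D.comp D = 0)
    (hsupp : ∀ I J : Fin N → Bool, ¬ I ≤ J → hcComp V D J I = 0)
    (g : ∀ I : Fin N → Bool, ZMod n → Submodule (ZMod 2) (V I))
    (hg : ∀ I, DirectSum.IsInternal (g I))
    (s : (Fin N → Bool) → ZMod n)
    (hdiag : ∀ (I : Fin N → Bool) (j : ZMod n), ∀ x ∈ g I j,
      hcComp V D I I x ∈ g I (j + 1))
    (hcompdeg : ∀ (I J : Fin N → Bool) (j : ZMod n), ∀ x ∈ g I j,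
      hcComp V D J I x ∈ g J (j + 1 + s I - s J)) :
    ∀ i : ZMod n,
      Module.finrank (ZMod 2)
          (GrHmlg D (fun i => Submodule.pi Set.univ fun I => g I (i - s I)) i) ≤
        ∑ I : Fin N → Bool,
          Module.finrank (ZMod 2) (GrHmlg (hcComp V D I I) (g I) (i - s I)) := by
  classical
  intro i
  set Gr : ZMod n → Submodule (ZMod 2) (∀ I, V I) :=
    fun j => Submodule.pi Set.univ fun I => g I (j - s I) with hGrdef
  -- key diagonal formula on the filtration
  have keydiag : ∀ (m : ℕ) (I₀ : Fin N → Bool), vlv I₀ = m →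
      ∀ x ∈ Fsub V m, (D x) I₀ = hcComp V D I₀ I₀ (x I₀) := by
    intro m I₀ hm x hx
    rw [apply_eq_sum_comp]
    rw [Finset.sum_eq_single I₀]
    · intro J _ hJ
      by_cases hJm : vlv J < m
      · rw [hx J hJm, map_zero]
      · have hnle : ¬ J ≤ I₀ := by
          intro hle
          have h1 : vlv J ≤ m := hm ▸ vlv_mono hle
          exact hJ (vlv_inj (by omega : vlv J = vlv I₀))
        rw [hsupp J I₀ hnle]; rfl
    · intro h; exact absurd (Finset.mem_univ I₀) h
  have hDGr : ∀ x ∈ Gr (i - 1), D x ∈ Gr i := by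
    intro x hx
    rw [Submodule.mem_pi]
    intro I _
    rw [apply_eq_sum_comp]
    apply Submodule.sum_mem
    intro J _
    have hxJ : x J ∈ g J (i - 1 - s J) := Submodule.mem_pi.mp hx J (Set.mem_univ J)
    have hmem := hcompdeg J I (i - 1 - s J) (x J) hxJ
    have he : i - 1 - s J + 1 + s J - s I = i - s I := by ring
    rwa [he] at hmem
  have hDF : ∀ (m : ℕ), ∀ x ∈ Fsub V m, D x ∈ Fsub V m := by
    intro m x hx
    rw [mem_Fsub]
    intro I hI
    rw [apply_eq_sum_comp]
    apply Finset.sum_eq_zero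
    intro J _
    by_cases hJm : vlv J < m
    · rw [hx J hJm, map_zero]
    · have hnle : ¬ J ≤ I := by
        intro hle
        have := vlv_mono hle
        omega
      rw [hsupp J I hnle]; rfl
  have hDker : ∀ x, D x ∈ LinearMap.ker D := by
    intro x
    rw [LinearMap.mem_ker, ← LinearMap.comp_apply, hD2]
    rfl
  have hdd : ∀ (I : Fin N → Bool) (y : V I),
      hcComp V D I I (hcComp V D I I y) = 0 := by
    intro I y
    have h0 : D (D (Pi.single I y)) = 0 := by
      rw [← LinearMap.comp_apply, hD2]; rfl
    have h1 : D (D (Pi.single I y)) I = ∑ J, hcComp V D I J ((D (Pi.single I y)) J) :=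
      apply_eq_sum_comp V D _ I
    rw [h0] at h1
    rw [Finset.sum_eq_single I] at h1
    · exact h1.symm
    · intro J _ hJ
      by_cases hIJ : I ≤ J
      · have hnle : ¬ J ≤ I := fun h => hJ (le_antisymm h hIJ)
        rw [hsupp J I hnle]
        rfl
      · rw [show ((D (Pi.single I y)) J) = hcComp V D J I y from rfl,
          hsupp I J hIJ, LinearMap.zero_apply, map_zero]
    · intro h; exact absurd (Finset.mem_univ I) h
  have hBU : ∀ I, Submodule.map (hcComp V D I I) (g I (i - s I - 1)) ≤
      LinearMap.ker (hcComp V D I I) ⊓ g I (i - s I) := by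
    rintro I y ⟨u, hu, rfl⟩
    refine ⟨hdd I u, ?_⟩
    have hmem := hdiag I (i - s I - 1) u hu
    have he : i - s I - 1 + 1 = i - s I := by ring
    rwa [he] at hmem
  -- the step inequality
  have step : ∀ m : ℕ,
      Module.finrank (ZMod 2) ↥(LinearMap.ker D ⊓ Gr i ⊓ Fsub V m) +
        Module.finrank (ZMod 2) ↥(Submodule.map D (Gr (i - 1) ⊓ Fsub V (m + 1))) +
        ∑ I ∈ Finset.univ.filter (fun I => vlv I = m),
          Module.finrank (ZMod 2) ↥(Submodule.map (hcComp V D I I) (g I (i - s I - 1))) ≤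
      Module.finrank (ZMod 2) ↥(Submodule.map D (Gr (i - 1) ⊓ Fsub V m)) +
        Module.finrank (ZMod 2) ↥(LinearMap.ker D ⊓ Gr i ⊓ Fsub V (m + 1)) +
        ∑ I ∈ Finset.univ.filter (fun I => vlv I = m),
          Module.finrank (ZMod 2) ↥(LinearMap.ker (hcComp V D I I) ⊓ g I (i - s I)) := by
    intro m
    by_cases hex : ∃ I₀ : Fin N → Bool, vlv I₀ = m
    · obtain ⟨I₀, hI₀⟩ := hex
      have hfil : Finset.univ.filter (fun I => vlv I = m) = {I₀} := by
        ext J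
        simp only [Finset.mem_filter, Finset.mem_univ, true_and, Finset.mem_singleton]
        constructor
        · intro h; exact vlv_inj (h.trans hI₀.symm)
        · rintro rfl; exact hI₀
      set π : (∀ I, V I) →ₗ[ZMod 2] V I₀ := LinearMap.proj I₀ with hπ
      have hπa : ∀ x : ∀ I, V I, π x = x I₀ := fun x => rfl
      have f1 : LinearMap.ker D ⊓ Gr i ⊓ Fsub V m ⊓ LinearMap.ker π
          = LinearMap.ker D ⊓ Gr i ⊓ Fsub V (m + 1) := by
        rw [inf_assoc]
        congr 1
        ext x
        simp only [Submodule.mem_inf, mem_Fsub, LinearMap.mem_ker, hπ,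
          LinearMap.proj_apply]
        constructor
        · rintro ⟨hf, h0⟩ I hI
          by_cases hIm : vlv I < m
          · exact hf I hIm
          · have hII : I = I₀ := vlv_inj (by omega)
            rw [hII]; exact h0
        · intro h
          exact ⟨fun I hI => h I (by omega), h I₀ (by omega)⟩
      have f2 : Submodule.map π (LinearMap.ker D ⊓ Gr i ⊓ Fsub V m) ≤
          LinearMap.ker (hcComp V D I₀ I₀) ⊓ g I₀ (i - s I₀) := by
        rintro y ⟨x, ⟨⟨hk, hgr⟩, hf⟩, rfl⟩
        constructor
        · show hcComp V D I₀ I₀ (π x) = 0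
          rw [hπa, ← keydiag m I₀ hI₀ x hf]
          have hk0 : D x = 0 := hk
          rw [hk0]; rfl
        · exact Submodule.mem_pi.mp hgr I₀ (Set.mem_univ I₀)
      have f3 : Submodule.map π (Submodule.map D (Gr (i - 1) ⊓ Fsub V m)) =
          Submodule.map (hcComp V D I₀ I₀) (g I₀ (i - s I₀ - 1)) := by
        apply le_antisymm
        · rintro y ⟨z, ⟨x, ⟨hx1, hx2⟩, rfl⟩, rfl⟩
          refine ⟨x I₀, ?_, ?_⟩
          · have hm := Submodule.mem_pi.mp hx1 I₀ (Set.mem_univ I₀)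
            have he : i - 1 - s I₀ = i - s I₀ - 1 := by ring
            rwa [he] at hm
          · exact (((hπa _).trans (keydiag m I₀ hI₀ x hx2))).symm
        · rintro y ⟨u, hu, rfl⟩
          have hsing : Pi.single I₀ u ∈ Fsub V m := by
            rw [mem_Fsub]
            intro J hJ
            apply Pi.single_eq_of_ne
            rintro rfl
            omega
          refine ⟨D (Pi.single I₀ u), ⟨Pi.single I₀ u, ⟨?_, hsing⟩, rfl⟩, ?_⟩
          · show Pi.single I₀ u ∈ Gr (i - 1)
            rw [Submodule.mem_pi]
            intro J _
            by_cases hJ : J = I₀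
            · rw [hJ, Pi.single_eq_same]
              have he : i - s I₀ - 1 = i - 1 - s I₀ := by ring
              rwa [he] at hu
            · rw [Pi.single_eq_of_ne hJ]
              exact Submodule.zero_mem _
          · rw [hπa, keydiag m I₀ hI₀ _ hsing, Pi.single_eq_same]
      have f4 : Submodule.map D (Gr (i - 1) ⊓ Fsub V (m + 1)) ≤
          Submodule.map D (Gr (i - 1) ⊓ Fsub V m) ⊓ LinearMap.ker π := by
        rintro y ⟨x, ⟨hx1, hx2⟩, rfl⟩
        constructor
        · exact ⟨x, ⟨hx1, Fsub_antitone V (Nat.le_succ m) hx2⟩, rfl⟩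
        · show π (D x) = 0
          rw [hπa]
          exact hDF (m + 1) x hx2 I₀ (by omega)
      have c1 := rank_split π (LinearMap.ker D ⊓ Gr i ⊓ Fsub V m)
      have c2 := rank_split π (Submodule.map D (Gr (i - 1) ⊓ Fsub V m))
      rw [f1] at c1
      rw [f3] at c2
      have c3 : Module.finrank (ZMod 2)
            ↥(Submodule.map π (LinearMap.ker D ⊓ Gr i ⊓ Fsub V m)) ≤
          Module.finrank (ZMod 2)
            ↥(LinearMap.ker (hcComp V D I₀ I₀) ⊓ g I₀ (i - s I₀)) :=
        Submodule.finrank_mono f2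
      have c4 : Module.finrank (ZMod 2)
            ↥(Submodule.map D (Gr (i - 1) ⊓ Fsub V (m + 1))) ≤
          Module.finrank (ZMod 2)
            ↥(Submodule.map D (Gr (i - 1) ⊓ Fsub V m) ⊓ LinearMap.ker π) :=
        Submodule.finrank_mono f4
      rw [hfil, Finset.sum_singleton, Finset.sum_singleton]
      omega
    · push_neg at hex
      have hFe : Fsub V (m + 1) = Fsub V m := by
        ext x
        simp only [mem_Fsub]
        constructor
        · intro h I hI; exact h I (by omega)
        · intro h I hI
          have := hex I
          exact h I (by omega)
      rw [Finset.filter_eq_empty_iff.mpr (fun I _ => hex I), hFe]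
      simp only [Finset.sum_empty, add_zero]
      omega
  -- telescoping
  have tele : ∀ t : ℕ,
      Module.finrank (ZMod 2) ↥(LinearMap.ker D ⊓ Gr i ⊓ Fsub V 0) +
        Module.finrank (ZMod 2) ↥(Submodule.map D (Gr (i - 1) ⊓ Fsub V t)) +
        ∑ m ∈ Finset.range t, ∑ I ∈ Finset.univ.filter (fun I => vlv I = m),
          Module.finrank (ZMod 2) ↥(Submodule.map (hcComp V D I I) (g I (i - s I - 1))) ≤
      Module.finrank (ZMod 2) ↥(Submodule.map D (Gr (i - 1) ⊓ Fsub V 0)) +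
        Module.finrank (ZMod 2) ↥(LinearMap.ker D ⊓ Gr i ⊓ Fsub V t) +
        ∑ m ∈ Finset.range t, ∑ I ∈ Finset.univ.filter (fun I => vlv I = m),
          Module.finrank (ZMod 2) ↥(LinearMap.ker (hcComp V D I I) ⊓ g I (i - s I)) := by
    intro t
    induction t with
    | zero => simp only [Finset.range_zero, Finset.sum_empty, add_zero]; omega
    | succ t ih =>
      have hst := step t
      rw [Finset.sum_range_succ, Finset.sum_range_succ]
      omega
  have final := tele (2 ^ N)
  rw [Fsub_zero, Fsub_top, inf_top_eq, inf_top_eq, inf_bot_eq, inf_bot_eq,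
    Submodule.map_bot, finrank_bot] at final
  have hcsum : (∑ m ∈ Finset.range (2 ^ N), ∑ I ∈ Finset.univ.filter (fun I => vlv I = m),
      Module.finrank (ZMod 2) ↥(Submodule.map (hcComp V D I I) (g I (i - s I - 1)))) =
      ∑ I : Fin N → Bool,
        Module.finrank (ZMod 2) ↥(Submodule.map (hcComp V D I I) (g I (i - s I - 1))) :=
    Finset.sum_fiberwise_of_maps_to (fun I _ => Finset.mem_range.mpr (vlv_lt I)) _
  have hesum : (∑ m ∈ Finset.range (2 ^ N), ∑ I ∈ Finset.univ.filter (fun I => vlv I = m),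
      Module.finrank (ZMod 2) ↥(LinearMap.ker (hcComp V D I I) ⊓ g I (i - s I))) =
      ∑ I : Fin N → Bool,
        Module.finrank (ZMod 2) ↥(LinearMap.ker (hcComp V D I I) ⊓ g I (i - s I)) :=
    Finset.sum_fiberwise_of_maps_to (fun I _ => Finset.mem_range.mpr (vlv_lt I)) _
  rw [hcsum, hesum] at final
  have hq0sub : Submodule.map D (Gr (i - 1)) ≤ LinearMap.ker D ⊓ Gr i := by
    rintro y ⟨x, hx, rfl⟩
    exact ⟨hDker x, hDGr x hx⟩
  have q0 : Module.finrank (ZMod 2) (GrHmlg D Gr i) +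
      Module.finrank (ZMod 2) ↥(Submodule.map D (Gr (i - 1))) =
      Module.finrank (ZMod 2) ↥(LinearMap.ker D ⊓ Gr i) :=
    finrank_quot _ _ hq0sub
  have qI : ∀ I : Fin N → Bool,
      Module.finrank (ZMod 2) (GrHmlg (hcComp V D I I) (g I) (i - s I)) +
        Module.finrank (ZMod 2) ↥(Submodule.map (hcComp V D I I) (g I (i - s I - 1))) =
      Module.finrank (ZMod 2) ↥(LinearMap.ker (hcComp V D I I) ⊓ g I (i - s I)) :=
    fun I => finrank_quot _ _ (hBU I)
  have hsum : (∑ I : Fin N → Bool,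
        Module.finrank (ZMod 2) (GrHmlg (hcComp V D I I) (g I) (i - s I))) +
      (∑ I : Fin N → Bool,
        Module.finrank (ZMod 2) ↥(Submodule.map (hcComp V D I I) (g I (i - s I - 1)))) =
      ∑ I : Fin N → Bool,
        Module.finrank (ZMod 2) ↥(LinearMap.ker (hcComp V D I I) ⊓ g I (i - s I)) := by
    rw [← Finset.sum_add_distrib]
    exact Finset.sum_congr rfl fun I _ => qI I
  omega
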